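/- arXiv:2212.13084 — 2 statements merged into one kernel-verified Lean document; each statement's English description precedes it below -/
import Mathlib

section
/- Converse moment characterization: Suppose Y is an absolutely continuous random variable with CDF F_Y supported on (a,b), F_0 is an absolutely continuous strictly increasing CDF on (a,b), A(y) = -log F_0(y), and there exists θ > 0 such that E[A(Y)^n | Y ≤ y] = A(y)^n + (n/θ)E[A(Y)^{n-1} | Y ≤ y] holds for some fixed integer n ≥ 1 and all y ∈ (a,b). Then the reversed hazard rate of Y equals θ times that of F_0, i.e., f_Y(y)/F_Y(y) = θ·f_0(y)/F_0(y) for all y ∈ (a,b). -/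
open Set intervalIntegral MeasureTheory Filter Topology


/-- Key FTC-type lemma: the primitive of `A^k * fY` has derivative `A z ^k * fY z`
at every interior point, even though `fY` is only known to be an everywhere
derivative of `FY` (not continuous). Proved by integration by parts. -/
lemma stmt7_key (a b : ℝ) (F0 f0 FY fY A : ℝ → ℝ)
    (hF0pos : ∀ y ∈ Set.Ioo a b, 0 < F0 y)
    (hF0deriv : ∀ y ∈ Set.Ioo a b, HasDerivAt F0 (f0 y) y)
    (hf0nonneg : ∀ y ∈ Set.Ioo a b, 0 ≤ f0 y)
    (hFYderiv : ∀ y ∈ Set.Ioo a b, HasDerivAt FY (fY y) y)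
    (hAderiv : ∀ y ∈ Set.Ioo a b, HasDerivAt A (-(f0 y / F0 y)) y)
    (hfYint : ∀ l ∈ Set.Ioo a b, ∀ r ∈ Set.Ioo a b, IntervalIntegrable fY volume l r)
    (k : ℕ)
    (hint : ∀ x ∈ Set.Ioo a b, IntervalIntegrable (fun t => A t ^ k * fY t) volume a x)
    (z : ℝ) (hz : z ∈ Set.Ioo a b) :
    HasDerivAt (fun x => ∫ t in a..x, A t ^ k * fY t) (A z ^ k * fY z) z := by
  obtain ⟨hza, hzb⟩ := hz
  set c := (a + z) / 2 with hc
  set d := (z + b) / 2 with hd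
  have hac : a < c := by simp [hc]; linarith
  have hcz : c < z := by simp [hc]; linarith
  have hzd : z < d := by simp [hd]; linarith
  have hdb : d < b := by simp [hd]; linarith
  have hsub : Set.Ioo c d ⊆ Set.Ioo a b := Set.Ioo_subset_Ioo hac.le hdb.le
  have hzcd : z ∈ Set.Ioo c d := ⟨hcz, hzd⟩
  -- continuity facts on Ioo a b
  have hF0cont : ContinuousOn F0 (Set.Ioo a b) := fun x hx =>
    ((hF0deriv x hx).continuousAt).continuousWithinAt
  have hAcont : ContinuousOn A (Set.Ioo a b) := fun x hx =>
    ((hAderiv x hx).continuousAt).continuousWithinAt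
  have hFYcont : ContinuousOn FY (Set.Ioo a b) := fun x hx =>
    ((hFYderiv x hx).continuousAt).continuousWithinAt
  -- the auxiliary functions
  set u : ℝ → ℝ := fun t => A t ^ k with hu
  set u' : ℝ → ℝ := fun t => (-(k * A t ^ (k - 1) / F0 t)) * f0 t with hu'
  set v : ℝ → ℝ := fun t => FY t - FY z with hv
  have huderiv : ∀ t ∈ Set.Ioo a b, HasDerivAt u (u' t) t := by
    intro t ht
    have h1 := (hAderiv t ht).pow k
    have : (k : ℝ) * A t ^ (k - 1) * (-(f0 t / F0 t)) = u' t := by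
      have hF0 : F0 t ≠ 0 := (hF0pos t ht).ne'
      simp only [hu']; ring
    rwa [this] at h1
  have hvderiv : ∀ t ∈ Set.Ioo a b, HasDerivAt v (fY t) t := by
    intro t ht
    simpa [hv] using (hFYderiv t ht).sub_const (FY z)
  -- integrability of f0 on subintervals
  have hf0int : ∀ l ∈ Set.Ioo a b, ∀ r ∈ Set.Ioo a b, IntervalIntegrable f0 volume l r := by
    intro l hl r hr
    set a' := (a + min l r) / 2 with ha'
    set b' := (max l r + b) / 2 with hb'
    have h1 : a < a' := by simp [ha']; cases le_total l r with
      | inl h => simp [min_eq_left h]; linarith [hl.1]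
      | inr h => simp [min_eq_right h]; linarith [hr.1]
    have h2 : a' < min l r := by
      rcases le_total l r with h | h
      · simp [ha', min_eq_left h]; linarith [hl.1]
      · simp [ha', min_eq_right h]; linarith [hr.1]
    have h3 : max l r < b' := by
      rcases le_total l r with h | h
      · simp [hb', max_eq_right h]; linarith [hr.2]
      · simp [hb', max_eq_left h]; linarith [hl.2]
    have h4 : b' < b := by
      rcases le_total l r with h | h
      · simp [hb', max_eq_right h]; linarith [hr.2]
      · simp [hb', max_eq_left h]; linarith [hl.2]
    have hIoo : IntegrableOn f0 (Ioc a' b') volume := by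
      apply integrableOn_deriv_of_nonneg
      · exact hF0cont.mono (fun y hy => ⟨h1.trans_le hy.1, lt_of_le_of_lt hy.2 h4⟩)
      · intro x hx
        exact hF0deriv x ⟨h1.trans hx.1, hx.2.trans h4⟩
      · intro x hx
        exact hf0nonneg x ⟨h1.trans hx.1, hx.2.trans h4⟩
    rw [intervalIntegrable_iff]
    exact hIoo.mono_set (fun t ht => ⟨h2.trans_le (le_trans (le_min_iff.mpr ⟨min_le_left l r |>.trans (le_refl _), min_le_right l r⟩) ht.1.le), ht.2.trans h3.le⟩)
  -- integrability of u', v', products on subintervals of (a,b)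
  have hmemIcc : ∀ l ∈ Set.Ioo a b, ∀ r ∈ Set.Ioo a b, Set.uIcc l r ⊆ Set.Ioo a b := by
    intro l hl r hr t ht
    rcases ht with ⟨h1, h2⟩
    constructor
    · exact lt_of_lt_of_le (lt_min hl.1 hr.1) h1
    · exact lt_of_le_of_lt h2 (max_lt hl.2 hr.2)
  have hu'int : ∀ l ∈ Set.Ioo a b, ∀ r ∈ Set.Ioo a b, IntervalIntegrable u' volume l r := by
    intro l hl r hr
    apply (hf0int l hl r hr).continuousOn_mul
    apply ContinuousOn.mono _ (hmemIcc l hl r hr)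
    exact (((hAcont.pow (k-1)).const_smul (k:ℝ)).div hF0cont (fun x hx => (hF0pos x hx).ne')).neg
  have hgint : ∀ (j : ℕ), ∀ l ∈ Set.Ioo a b, ∀ r ∈ Set.Ioo a b,
      IntervalIntegrable (fun t => A t ^ j * fY t) volume l r := by
    intro j l hl r hr
    apply (hfYint l hl r hr).continuousOn_mul
    exact (hAcont.pow j).mono (hmemIcc l hl r hr)
  have hvcont : ContinuousOn v (Set.Ioo a b) := hFYcont.sub continuousOn_const
  -- integration by parts identity
  have hibp : ∀ x ∈ Set.Ioo c d, ∫ t in z..x, A t ^ k * fY t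
      = u x * v x - ∫ t in z..x, u' t * v t := by
    intro x hx
    have hzx : Set.uIcc z x ⊆ Set.Ioo a b := hmemIcc z ⟨hza, hzb⟩ x (hsub hx)
    have h1 : ∫ t in z..x, (u' t * v t + u t * fY t) = u x * v x - u z * v z := by
      apply intervalIntegral.integral_deriv_mul_eq_sub
      · intro t ht; exact huderiv t (hzx ht)
      · intro t ht; exact hvderiv t (hzx ht)
      · exact hu'int z ⟨hza, hzb⟩ x (hsub hx)
      · exact hfYint z ⟨hza, hzb⟩ x (hsub hx)
    have hvz : v z = 0 := by simp [hv]
    have hu'v : IntervalIntegrable (fun t => u' t * v t) volume z x :=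
      (hu'int z ⟨hza, hzb⟩ x (hsub hx)).mul_continuousOn (hvcont.mono hzx)
    have hufY : IntervalIntegrable (fun t => u t * fY t) volume z x :=
      hgint k z ⟨hza, hzb⟩ x (hsub hx)
    rw [integral_add hu'v hufY, hvz] at h1
    have : ∫ t in z..x, u t * fY t = u x * v x - ∫ t in z..x, u' t * v t := by
      rw [mul_zero] at h1; linarith
    simpa [hu] using this
  -- the remainder term has derivative zero at z
  have hW : HasDerivAt (fun x => ∫ t in z..x, u' t * v t) 0 z := by
    rw [hasDerivAt_iff_tendsto_slope, Metric.tendsto_nhdsWithin_nhds]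
    intro ε hε
    obtain ⟨C, hC⟩ : ∃ C, ∀ t ∈ Set.Icc c d, ‖-((k:ℝ) * A t ^ (k-1) / F0 t)‖ ≤ C := by
      apply IsCompact.exists_bound_of_continuousOn isCompact_Icc
      apply ContinuousOn.mono _ (fun t (ht : t ∈ Set.Icc c d) =>
        (⟨hac.trans_le ht.1, lt_of_le_of_lt ht.2 hdb⟩ : t ∈ Set.Ioo a b))
      exact (((hAcont.pow (k-1)).const_smul (k:ℝ)).div hF0cont
        (fun x hx => (hF0pos x hx).ne')).neg
    set C' : ℝ := |C| + 1 with hC'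
    have hC'pos : 0 < C' := by positivity
    have hCle : ∀ t ∈ Set.Icc c d, ‖-((k:ℝ) * A t ^ (k-1) / F0 t)‖ ≤ C' := by
      intro t ht
      exact (hC t ht).trans (by rw [hC']; nlinarith [le_abs_self C])
    set K : ℝ := |f0 z| + 1 with hK
    have hKpos : 0 < K := by positivity
    have hslopeF0 := hasDerivAt_iff_tendsto_slope.mp (hF0deriv z ⟨hza, hzb⟩)
    rw [Metric.tendsto_nhdsWithin_nhds] at hslopeF0
    obtain ⟨δ₁, hδ₁pos, hδ₁⟩ := hslopeF0 1 one_pos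
    have hFYc : ContinuousAt FY z := (hFYderiv z ⟨hza, hzb⟩).continuousAt
    set ε' : ℝ := ε / (C' * K + 1) with hε'def
    have hε'pos : 0 < ε' := by positivity
    obtain ⟨δ₂, hδ₂pos, hδ₂⟩ := Metric.continuousAt_iff.mp hFYc ε' hε'pos
    refine ⟨min (min δ₁ δ₂) (min (z - c) (d - z)),
      lt_min (lt_min hδ₁pos hδ₂pos) (lt_min (by linarith) (by linarith)), ?_⟩
    intro x hxne hxd
    have hxz : x ≠ z := hxne
    have hdist : |x - z| < min (min δ₁ δ₂) (min (z - c) (d - z)) := by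
      rwa [Real.dist_eq] at hxd
    have hxcd : x ∈ Set.Ioo c d := by
      rcases abs_lt.mp (hdist.trans_le (le_trans (min_le_right _ _) (le_refl _))) with ⟨h1, h2⟩
      have h3 : min (z - c) (d - z) ≤ z - c := min_le_left _ _
      have h4 : min (z - c) (d - z) ≤ d - z := min_le_right _ _
      constructor <;> nlinarith [abs_lt.mp (hdist.trans_le (min_le_right _ _))]
    have hxab : x ∈ Set.Ioo a b := hsub hxcd
    have hzxIcc : Set.uIcc z x ⊆ Set.Ioo a b := hmemIcc z ⟨hza, hzb⟩ x hxab
    have habs : ∀ t ∈ Set.uIoc z x, |t - z| ≤ |x - z| := by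
      intro t ht
      rcases le_total z x with h | h
      · rw [Set.uIoc_of_le h] at ht
        rw [abs_of_nonneg (by linarith [ht.1] : (0:ℝ) ≤ t - z),
          abs_of_nonneg (by linarith : (0:ℝ) ≤ x - z)]
        linarith [ht.2]
      · rw [Set.uIoc_of_ge h] at ht
        rw [abs_of_nonpos (by linarith [ht.2] : t - z ≤ 0),
          abs_of_nonpos (by linarith : x - z ≤ 0)]
        linarith [ht.1]
    have hWx : ‖∫ t in z..x, u' t * v t‖ ≤ |∫ t in z..x, (C' * ε') * f0 t| := by
      apply intervalIntegral.norm_integral_le_abs_of_norm_le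
      · apply (MeasureTheory.ae_restrict_iff' measurableSet_uIoc).mpr
        apply Filter.Eventually.of_forall
        intro t ht
        have h1 : |t - z| ≤ |x - z| := habs t ht
        have htcd : t ∈ Set.Icc c d := by
          have h3 := hdist.trans_le (min_le_right _ _)
          have h5 := abs_lt.mp (h1.trans_lt h3)
          have h6 : min (z - c) (d - z) ≤ z - c := min_le_left _ _
          have h7 : min (z - c) (d - z) ≤ d - z := min_le_right _ _
          constructor <;> linarith [h5.1, h5.2]
        have htab : t ∈ Set.Ioo a b := ⟨hac.trans_le htcd.1, lt_of_le_of_lt htcd.2 hdb⟩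
        have hvt : ‖v t‖ ≤ ε' := by
          have hd2 : dist t z < δ₂ := by
            rw [Real.dist_eq]
            exact lt_of_le_of_lt h1 (hdist.trans_le ((min_le_left _ _).trans (min_le_right _ _)))
          have := hδ₂ hd2
          rw [Real.dist_eq] at this
          simp only [hv, Real.norm_eq_abs]
          exact this.le
        have hu't : ‖u' t‖ ≤ C' * f0 t := by
          simp only [hu', norm_mul]
          calc ‖-((k:ℝ) * A t ^ (k-1) / F0 t)‖ * ‖f0 t‖
              ≤ C' * ‖f0 t‖ := by
                apply mul_le_mul_of_nonneg_right (hCle t htcd) (norm_nonneg _)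
            _ = C' * f0 t := by
                rw [Real.norm_eq_abs, abs_of_nonneg (hf0nonneg t htab)]
        calc ‖u' t * v t‖ = ‖u' t‖ * ‖v t‖ := norm_mul _ _
          _ ≤ (C' * f0 t) * ε' := by
              exact mul_le_mul hu't hvt (norm_nonneg _)
                (mul_nonneg hC'pos.le (hf0nonneg t htab))
          _ = (C' * ε') * f0 t := by ring
      · exact (hf0int z ⟨hza, hzb⟩ x hxab).const_mul _
    have hF0FTC : ∫ t in z..x, f0 t = F0 x - F0 z := by
      apply intervalIntegral.integral_eq_sub_of_hasDerivAt
      · intro t ht; exact hF0deriv t (hzxIcc ht)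
      · exact hf0int z ⟨hza, hzb⟩ x hxab
    have hint2 : ∫ t in z..x, (C' * ε') * f0 t = (C' * ε') * (F0 x - F0 z) := by
      rw [intervalIntegral.integral_const_mul, hF0FTC]
    have hslopebd : |F0 x - F0 z| ≤ K * |x - z| := by
      have hd1 : dist x z < δ₁ := by
        rw [Real.dist_eq]
        exact hdist.trans_le ((min_le_left _ _).trans (min_le_left _ _))
      have h := hδ₁ hxne hd1
      rw [Real.dist_eq, slope_def_field] at h
      have h2 : |(F0 x - F0 z) / (x - z)| ≤ K := by
        have := abs_sub_abs_le_abs_sub ((F0 x - F0 z) / (x - z)) (f0 z)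
        rw [hK]; linarith [h.le, this]
      have hxz' : |x - z| ≠ 0 := by
        simp only [ne_eq, abs_eq_zero, sub_eq_zero]; exact hxz
      rw [abs_div] at h2
      calc |F0 x - F0 z| = |F0 x - F0 z| / |x - z| * |x - z| := by
            field_simp
        _ ≤ K * |x - z| := by
            apply mul_le_mul_of_nonneg_right h2 (abs_nonneg _)
    have hxzpos : 0 < |x - z| := by
      simp only [abs_pos, ne_eq, sub_eq_zero]; exact hxz
    rw [Real.dist_eq, slope_def_field, intervalIntegral.integral_same, sub_zero, sub_zero,
      abs_div]
    rw [div_lt_iff₀ hxzpos]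
    calc |∫ t in z..x, u' t * v t| ≤ |∫ t in z..x, (C' * ε') * f0 t| := hWx
      _ = (C' * ε') * |F0 x - F0 z| := by
          rw [hint2, abs_mul, abs_of_nonneg (by positivity : (0:ℝ) ≤ C' * ε')]
      _ ≤ (C' * ε') * (K * |x - z|) := by
          apply mul_le_mul_of_nonneg_left hslopebd (by positivity)
      _ < ε * |x - z| := by
          have hrw : C' * ε' * (K * |x - z|) = (C' * ε' * K) * |x - z| := by ring
          have hlt : C' * ε' * K < ε := by
            have h0 : (0:ℝ) < C' * K + 1 := by positivity
            have heq : C' * ε' * K = ε * (C' * K) / (C' * K + 1) := by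
              rw [hε'def]; field_simp
            rw [heq, div_lt_iff₀ h0]
            have : ε * (C' * K + 1) = ε * (C' * K) + ε := by ring
            linarith
          rw [hrw]
          exact mul_lt_mul_of_pos_right hlt hxzpos
  -- derivative of the product term
  have hprod : HasDerivAt (fun x => u x * v x) (A z ^ k * fY z) z := by
    have h := (huderiv z ⟨hza, hzb⟩).mul (hvderiv z ⟨hza, hzb⟩)
    have hvz : v z = 0 := by simp [hv]
    have h2 : HasDerivAt (fun x => u x * v x) (u' z * v z + u z * fY z) z := h
    simpa [hvz, hu] using h2
  have hRHS : HasDerivAt (fun x => (∫ t in a..z, A t ^ k * fY t)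
      + (u x * v x - ∫ t in z..x, u' t * v t)) (A z ^ k * fY z) z := by
    simpa using (hprod.sub hW).const_add (∫ t in a..z, A t ^ k * fY t)
  apply hRHS.congr_of_eventuallyEq
  have hnb : Set.Ioo c d ∈ nhds z := Ioo_mem_nhds hcz hzd
  filter_upwards [hnb] with x hx
  rw [← intervalIntegral.integral_add_adjacent_intervals (hint z ⟨hza, hzb⟩)
    (hgint k z ⟨hza, hzb⟩ x (hsub hx))]
  rw [hibp x hx]

/-- Converse moment characterization: if for some fixed `n ≥ 1` the moment
recursion `E[A(Y)^n | Y ≤ y] = A(y)^n + (n/θ) E[A(Y)^{n-1} | Y ≤ y]` holds for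
all `y ∈ (a,b)`, then the reversed hazard rate of `Y` is `θ` times that of
`F₀`, i.e. `f_Y(y)/F_Y(y) = θ f₀(y)/F₀(y)`. -/
theorem stmt7 (a b : ℝ) (hab : a < b) (F0 f0 FY fY : ℝ → ℝ) (θ : ℝ) (hθ : 0 < θ)
    (n : ℕ) (hn : 1 ≤ n)
    (hF0pos : ∀ y ∈ Ioo a b, 0 < F0 y) (hF0lt : ∀ y ∈ Ioo a b, F0 y < 1)
    (hF0deriv : ∀ y ∈ Ioo a b, HasDerivAt F0 (f0 y) y)
    (hF0mono : StrictMonoOn F0 (Ioo a b))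
    (hFYpos : ∀ y ∈ Ioo a b, 0 < FY y)
    (hFYderiv : ∀ y ∈ Ioo a b, HasDerivAt FY (fY y) y)
    (hFYint : ∀ y ∈ Ioo a b, FY y = ∫ t in a..y, fY t)
    (A : ℝ → ℝ) (hA : ∀ y, A y = - Real.log (F0 y))
    (hrec : ∀ y ∈ Ioo a b,
      (∫ t in a..y, A t ^ n * fY t) / FY y
        = A y ^ n + ((n : ℝ) / θ) * ((∫ t in a..y, A t ^ (n - 1) * fY t) / FY y)) :
    ∀ y ∈ Ioo a b, fY y / FY y = θ * (f0 y / F0 y) := by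
  have hθne : θ ≠ 0 := hθ.ne'
  have hnne : (n : ℝ) ≠ 0 := Nat.cast_ne_zero.mpr (by omega)
  have hnpos : (0:ℝ) < n := by positivity
  have hAfun : A = fun y => -Real.log (F0 y) := funext hA
  have hApos : ∀ z ∈ Ioo a b, 0 < A z := by
    intro z hz
    rw [hA z]
    have := Real.log_neg (hF0pos z hz) (hF0lt z hz)
    linarith
  have hAderiv : ∀ z ∈ Ioo a b, HasDerivAt A (-(f0 z / F0 z)) z := by
    intro z hz
    have h : HasDerivAt (fun x => -Real.log (F0 x)) (-(f0 z / F0 z)) z :=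
      ((hF0deriv z hz).log (hF0pos z hz).ne').neg
    rwa [← hAfun] at h
  have hAcont : ContinuousOn A (Ioo a b) := fun x hx =>
    ((hAderiv x hx).continuousAt).continuousWithinAt
  have hF0cont : ContinuousOn F0 (Ioo a b) := fun x hx =>
    ((hF0deriv x hx).continuousAt).continuousWithinAt
  have hf0nonneg : ∀ z ∈ Ioo a b, 0 ≤ f0 z := by
    intro z hz
    have hslope := hasDerivAt_iff_tendsto_slope.mp (hF0deriv z hz)
    have h2 : Tendsto (slope F0 z) (𝓝[>] z) (𝓝 (f0 z)) :=
      hslope.mono_left (nhdsWithin_mono z (fun x hx => ne_of_gt hx))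
    refine ge_of_tendsto h2 ?_
    filter_upwards [Ioo_mem_nhdsGT_of_mem (⟨le_refl z, hz.2⟩ : z ∈ Ico z b)] with x hx
    rw [slope_def_field]
    apply div_nonneg _ (by linarith [hx.1])
    have := hF0mono hz ⟨hz.1.trans hx.1, hx.2⟩ hx.1
    linarith
  have hfYintA : ∀ x ∈ Ioo a b, IntervalIntegrable fY volume a x := by
    intro x hx
    by_contra h
    have h0 := intervalIntegral.integral_undef h
    rw [← hFYint x hx] at h0
    exact (hFYpos x hx).ne' h0
  have hfYint : ∀ l ∈ Ioo a b, ∀ r ∈ Ioo a b, IntervalIntegrable fY volume l r := by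
    intro l hl r hr
    exact (hfYintA l hl).symm.trans (hfYintA r hr)
  have hmemIcc : ∀ l ∈ Ioo a b, ∀ r ∈ Ioo a b, uIcc l r ⊆ Ioo a b := by
    intro l hl r hr t ht
    exact ⟨lt_of_lt_of_le (lt_min hl.1 hr.1) ht.1, lt_of_le_of_lt ht.2 (max_lt hl.2 hr.2)⟩
  have hgint : ∀ (j : ℕ), ∀ l ∈ Ioo a b, ∀ r ∈ Ioo a b,
      IntervalIntegrable (fun t => A t ^ j * fY t) volume l r := by
    intro j l hl r hr
    exact (hfYint l hl r hr).continuousOn_mul ((hAcont.pow j).mono (hmemIcc l hl r hr))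
  have hKEY : ∀ (k : ℕ),
      (∀ x ∈ Ioo a b, IntervalIntegrable (fun t => A t ^ k * fY t) volume a x) →
      ∀ z ∈ Ioo a b,
        HasDerivAt (fun x => ∫ t in a..x, A t ^ k * fY t) (A z ^ k * fY z) z :=
    fun k hint z hz => stmt7_key a b F0 f0 FY fY A hF0pos hF0deriv hf0nonneg hFYderiv
      hAderiv hfYint k hint z hz
  have hprop : ∀ (j : ℕ),
      (¬ ∀ x ∈ Ioo a b, IntervalIntegrable (fun t => A t ^ j * fY t) volume a x) →
      ∀ x ∈ Ioo a b, (∫ t in a..x, A t ^ j * fY t) = 0 := by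
    intro j h
    push_neg at h
    obtain ⟨x₀, hx₀, hni⟩ := h
    intro x hx
    apply intervalIntegral.integral_undef
    intro hint
    apply hni
    rcases le_total x₀ x with h | h
    · apply hint.mono_set
      rw [uIcc_of_le hx₀.1.le, uIcc_of_le hx.1.le]
      exact Icc_subset_Icc le_rfl h
    · exact hint.trans (hgint j x hx x₀ hx₀)
  -- the derivative of A^n * FY
  have hdpsi : ∀ z ∈ Ioo a b, HasDerivAt (fun x => A x ^ n * FY x)
      ((n:ℝ) * A z ^ (n-1) * (-(f0 z / F0 z)) * FY z + A z ^ n * fY z) z := by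
    intro z hz
    exact ((hAderiv z hz).pow n).mul (hFYderiv z hz)
  intro y hy
  have hFYne : FY y ≠ 0 := (hFYpos y hy).ne'
  have hF0ne : F0 y ≠ 0 := (hF0pos y hy).ne'
  have hAne : (0:ℝ) < A y ^ (n-1) := pow_pos (hApos y hy) _
  by_cases hIn : ∀ x ∈ Ioo a b, IntervalIntegrable (fun t => A t ^ n * fY t) volume a x
  · by_cases hIn1 : ∀ x ∈ Ioo a b, IntervalIntegrable (fun t => A t ^ (n-1) * fY t) volume a x
    · -- main case: both integrable
      have hPhiEq : ∀ x ∈ Ioo a b,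
          (∫ t in a..x, A t ^ n * fY t) - ((n:ℝ)/θ) * (∫ t in a..x, A t ^ (n-1) * fY t)
            = A x ^ n * FY x := by
        intro x hx
        have h := hrec x hx
        have hFx : FY x ≠ 0 := (hFYpos x hx).ne'
        have h' : (∫ t in a..x, A t ^ n * fY t) * θ
            = A x ^ n * (θ * FY x) + (n:ℝ) * ∫ t in a..x, A t ^ (n-1) * fY t := by
          apply mul_right_cancel₀ hFx
          field_simp at h
          linear_combination FY x * h
        field_simp
        linear_combination h'
      have hd1 := hKEY n hIn y hy
      have hd2 := hKEY (n-1) hIn1 y hy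
      have hdPhi := hd1.sub (hd2.const_mul ((n:ℝ)/θ))
      have hdPhi' : HasDerivAt (fun x => A x ^ n * FY x)
          (A y ^ n * fY y - ((n:ℝ)/θ) * (A y ^ (n-1) * fY y)) y := by
        apply hdPhi.congr_of_eventuallyEq
        filter_upwards [Ioo_mem_nhds hy.1 hy.2] with x hx
        exact (hPhiEq x hx).symm
      have heq := hdPhi'.unique (hdpsi y hy)
      -- algebra
      field_simp [hθne, hF0ne] at heq
      have h5 : ((n:ℝ) * A y ^ (n-1)) * (fY y * F0 y)
          = ((n:ℝ) * A y ^ (n-1)) * (θ * f0 y * FY y) := by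
        linear_combination -heq
      have h6 := mul_left_cancel₀ (mul_ne_zero hnne hAne.ne') h5
      field_simp
      linear_combination h6
    · -- g n integrable, g (n-1) junk: contradiction via MVT
      exfalso
      have hzero := hprop (n-1) hIn1
      have hPhiEq : ∀ x ∈ Ioo a b, (∫ t in a..x, A t ^ n * fY t) = A x ^ n * FY x := by
        intro x hx
        have h := hrec x hx
        rw [hzero x hx, zero_div, mul_zero, add_zero] at h
        exact (div_eq_iff (hFYpos x hx).ne').mp h
      have hf0zero : ∀ z ∈ Ioo a b, f0 z = 0 := by
        intro z hz
        have hd1 := hKEY n hIn z hz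
        have hd1' : HasDerivAt (fun x => A x ^ n * FY x) (A z ^ n * fY z) z := by
          apply hd1.congr_of_eventuallyEq
          filter_upwards [Ioo_mem_nhds hz.1 hz.2] with x hx
          exact (hPhiEq x hx).symm
        have heq := hd1'.unique (hdpsi z hz)
        have h7 : (n:ℝ) * A z ^ (n-1) * (-(f0 z / F0 z)) * FY z = 0 := by linarith
        rcases (hf0nonneg z hz).eq_or_lt' with h9 | h9
        · exact h9
        exfalso
        have hpos : 0 < (n:ℝ) * A z ^ (n-1) * (f0 z / F0 z) * FY z :=
          mul_pos (mul_pos (mul_pos hnpos (pow_pos (hApos z hz) _))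
            (div_pos h9 (hF0pos z hz))) (hFYpos z hz)
        nlinarith [h7]
      set d := (y + b)/2 with hdd
      have hyd : y < d := by rw [hdd]; linarith [hy.2]
      have hdb : d < b := by rw [hdd]; linarith [hy.2]
      have hsub2 : Icc y d ⊆ Ioo a b := fun t ht =>
        ⟨hy.1.trans_le ht.1, lt_of_le_of_lt ht.2 hdb⟩
      obtain ⟨w, hw, hw2⟩ := exists_hasDerivAt_eq_slope F0 f0 hyd
        (hF0cont.mono hsub2)
        (fun t ht => hF0deriv t (hsub2 (Ioo_subset_Icc_self ht)))
      have hds : 0 < (F0 d - F0 y) / (d - y) :=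
        div_pos (sub_pos.mpr (hF0mono hy (hsub2 ⟨hyd.le, le_refl d⟩) hyd)) (by linarith)
      rw [hf0zero w (hsub2 (Ioo_subset_Icc_self hw))] at hw2
      linarith
  · by_cases hIn1 : ∀ x ∈ Ioo a b, IntervalIntegrable (fun t => A t ^ (n-1) * fY t) volume a x
    · -- case ii-a : contradiction via sign of primitive
      exfalso
      have hzero := hprop n hIn
      have hPhi1Eq : ∀ x ∈ Ioo a b, (∫ t in a..x, A t ^ (n-1) * fY t)
          = -(θ/(n:ℝ)) * (A x ^ n * FY x) := by
        intro x hx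
        have h := hrec x hx
        rw [hzero x hx, zero_div] at h
        have hFx : FY x ≠ 0 := (hFYpos x hx).ne'
        field_simp at h
        field_simp
        linear_combination -h
      have hfY0 : ∀ z ∈ Ioo a b, 0 ≤ fY z := by
        intro z hz
        have hd2 := hKEY (n-1) hIn1 z hz
        have hdpsi2 : HasDerivAt (fun x => -(θ/(n:ℝ)) * (A x ^ n * FY x))
            (-(θ/(n:ℝ)) * ((n:ℝ) * A z ^ (n-1) * (-(f0 z / F0 z)) * FY z
              + A z ^ n * fY z)) z := (hdpsi z hz).const_mul _
        have hd2' : HasDerivAt (fun x => -(θ/(n:ℝ)) * (A x ^ n * FY x))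
            (A z ^ (n-1) * fY z) z := by
          apply hd2.congr_of_eventuallyEq
          filter_upwards [Ioo_mem_nhds hz.1 hz.2] with x hx
          exact (hPhi1Eq x hx).symm
        have heq := hd2'.unique hdpsi2
        have heq2 : A z ^ (n-1) * fY z + (θ/(n:ℝ)) * (A z ^ n * fY z)
            = θ * (A z ^ (n-1) * ((f0 z / F0 z) * FY z)) := by
          field_simp [hnne] at heq ⊢
          linear_combination heq
        by_contra hneg
        push_neg at hneg
        have hAn1 : 0 < A z ^ (n-1) := pow_pos (hApos z hz) _
        have hAn : 0 < A z ^ n := pow_pos (hApos z hz) _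
        have hL1 : A z ^ (n-1) * fY z < 0 := mul_neg_of_pos_of_neg hAn1 hneg
        have hL2 : (θ/(n:ℝ)) * (A z ^ n * fY z) < 0 :=
          mul_neg_of_pos_of_neg (div_pos hθ hnpos) (mul_neg_of_pos_of_neg hAn hneg)
        have hR : 0 ≤ θ * (A z ^ (n-1) * ((f0 z / F0 z) * FY z)) :=
          mul_nonneg hθ.le (mul_nonneg hAn1.le (mul_nonneg
            (div_nonneg (hf0nonneg z hz) (hF0pos z hz).le) (hFYpos z hz).le))
        linarith
      -- the primitive of a nonnegative function is nonnegative, contradiction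
      have hIyneg : (∫ t in a..y, A t ^ (n-1) * fY t) < 0 := by
        rw [hPhi1Eq y hy]
        have : 0 < (θ/(n:ℝ)) * (A y ^ n * FY y) :=
          mul_pos (div_pos hθ hnpos) (mul_pos (pow_pos (hApos y hy) _) (hFYpos y hy))
        linarith
      have hstep : ∀ t ∈ Ioo a y, (∫ s in a..t, A s ^ (n-1) * fY s)
          ≤ (∫ s in a..y, A s ^ (n-1) * fY s) := by
        intro t ht
        have htab : t ∈ Ioo a b := ⟨ht.1, ht.2.trans hy.2⟩
        have hsplit := intervalIntegral.integral_add_adjacent_intervals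
          (hIn1 t htab) (hgint (n-1) t htab y hy)
        have hnonneg : 0 ≤ ∫ s in t..y, A s ^ (n-1) * fY s := by
          apply intervalIntegral.integral_nonneg ht.2.le
          intro s hs
          have hsab : s ∈ Ioo a b := ⟨ht.1.trans_le hs.1, lt_of_le_of_lt hs.2 hy.2⟩
          exact mul_nonneg (pow_pos (hApos s hsab) _).le (hfY0 s hsab)
        linarith [hsplit]
      have htend : Tendsto (fun x => ∫ t in a..x, A t ^ (n-1) * fY t) (𝓝[>] a) (𝓝 0) := by
        have hiy : IntegrableOn (fun t => A t ^ (n-1) * fY t) (Icc a y) volume := by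
          have h1 := hIn1 y hy
          rw [intervalIntegrable_iff_integrableOn_Ioc_of_le hy.1.le] at h1
          rwa [integrableOn_Icc_iff_integrableOn_Ioc]
        have hcontp := intervalIntegral.continuousOn_primitive hiy
        have h2 : ContinuousWithinAt (fun x => ∫ t in Ioc a x, A t ^ (n-1) * fY t)
            (Icc a y) a := hcontp a ⟨le_refl a, hy.1.le⟩
        have h3 : Tendsto (fun x => ∫ t in Ioc a x, A t ^ (n-1) * fY t)
            (𝓝[Icc a y] a) (𝓝 0) := by
          have : (∫ t in Ioc a a, A t ^ (n-1) * fY t) = 0 := by simp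
          rw [← this]
          exact h2
        have h4 : 𝓝[>] a ≤ 𝓝[Icc a y] a := by
          refine le_trans (nhdsWithin_le_of_mem ?_) (nhdsWithin_mono a Ioc_subset_Icc_self)
          exact Ioc_mem_nhdsGT_of_mem ⟨le_refl a, hy.1⟩
        have h5 : Tendsto (fun x => ∫ t in Ioc a x, A t ^ (n-1) * fY t) (𝓝[>] a) (𝓝 0) :=
          h3.mono_left h4
        apply h5.congr'
        filter_upwards [Ioc_mem_nhdsGT_of_mem (⟨le_refl a, hy.1⟩ : a ∈ Ico a y)] with x hx
        rw [intervalIntegral.integral_of_le hx.1.le]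
      have hfinal : 0 ≤ ∫ t in a..y, A t ^ (n-1) * fY t := by
        apply le_of_tendsto htend
        filter_upwards [Ioo_mem_nhdsGT_of_mem (⟨le_refl a, hy.1⟩ : a ∈ Ico a y)] with t ht
        exact hstep t ht
      linarith
    · -- case ii-b : both junk
      exfalso
      have h := hrec y hy
      rw [hprop n hIn y hy, hprop (n-1) hIn1 y hy] at h
      simp only [zero_div, mul_zero, add_zero] at h
      have : A y ^ n = 0 := h.symm
      exact (pow_pos (hApos y hy) n).ne' this
end

section
/- Roy's representation: for an absolutely continuous bivariate CDF F on (a,b)² with F(b⁻,b⁻) = 1 and λ_i(y_i | Y_{3-i} ≤ y_{3-i}) = ∂ log F(y_1,y_2)/∂y_i, the distribution is recovered as F(y_1,y_2) = exp[ -∫_{y_1}^{b} λ_1(u | Y_2 ≤ b) du - ∫_{y_2}^{b} λ_2(v | Y_1 ≤ y_1) dv ]. -/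
open Set intervalIntegral

/-- Roy's representation: an absolutely continuous bivariate CDF `F` on `(a,b)²`
with `F(b,b) = 1` is recovered from its bivariate reversed hazard rates by
`F(y₁,y₂) = exp[-∫_{y₁}^b λ₁(u|Y₂ ≤ b) du - ∫_{y₂}^b λ₂(v|Y₁ ≤ y₁) dv]`. -/
theorem stmt19 (a b : ℝ) (hab : a < b) (F : ℝ → ℝ → ℝ)
    (hFpos : ∀ y1 ∈ Ioc a b, ∀ y2 ∈ Ioc a b, 0 < F y1 y2)
    (hFbb : F b b = 1)
    (y1 y2 : ℝ) (hy1 : y1 ∈ Ioo a b) (hy2 : y2 ∈ Ioo a b)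
    (lam1 lam2 : ℝ → ℝ)
    (hlam1 : ∀ u ∈ Icc y1 b, HasDerivAt (fun t => Real.log (F t b)) (lam1 u) u)
    (hlam2 : ∀ v ∈ Icc y2 b, HasDerivAt (fun t => Real.log (F y1 t)) (lam2 v) v)
    (hlam1c : ContinuousOn lam1 (Icc y1 b))
    (hlam2c : ContinuousOn lam2 (Icc y2 b)) :
    F y1 y2 = Real.exp (-(∫ u in y1..b, lam1 u) - ∫ v in y2..b, lam2 v) := by
  have hy1b : y1 ≤ b := le_of_lt hy1.2
  have hy2b : y2 ≤ b := le_of_lt hy2.2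
  have hI1 : (∫ u in y1..b, lam1 u) = Real.log (F b b) - Real.log (F y1 b) := by
    apply intervalIntegral.integral_eq_sub_of_hasDerivAt (f := fun t => Real.log (F t b))
    · intro u hu; exact hlam1 u (by rwa [uIcc_of_le hy1b] at hu)
    · exact (hlam1c.mono (by rw [uIcc_of_le hy1b])).intervalIntegrable
  have hI2 : (∫ v in y2..b, lam2 v) = Real.log (F y1 b) - Real.log (F y1 y2) := by
    apply intervalIntegral.integral_eq_sub_of_hasDerivAt (f := fun t => Real.log (F y1 t))
    · intro v hv; exact hlam2 v (by rwa [uIcc_of_le hy2b] at hv)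
    · exact (hlam2c.mono (by rw [uIcc_of_le hy2b])).intervalIntegrable
  have hpos : 0 < F y1 y2 :=
    hFpos y1 ⟨hy1.1, hy1b⟩ y2 ⟨hy2.1, hy2b⟩
  rw [hI1, hI2, hFbb, Real.log_one]
  ring_nf
  rw [Real.exp_log hpos]
end
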